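/- Let A₁, …, A_m be nonnegative n×n real matrices, α₁, …, α_m > 0 with Σα_j = 1, and S_j = A_jᵀ A_j. Then ‖A₁^{(α₁)} ∘ ⋯ ∘ A_m^{(α_m)}‖ ≤ ρ(S₁^{(α₁)} ∘ ⋯ ∘ S_m^{(α_m)})^{1/2} ≤ ‖A₁‖^{α₁} ⋯ ‖A_m‖^{α_m}, where ‖·‖ is the Euclidean operator norm. -/

import Mathlib

open Matrix

/-- Spectral radius of a real matrix: max modulus of its (complex) eigenvalues. -/
noncomputable def specRad {N : Type*} [Fintype N] [DecidableEq N] (A : Matrix N N ℝ) : ℝ :=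
  (spectralRadius ℂ (A.map Complex.ofReal)).toReal

/-- Operator norm induced by the Euclidean (ℓ²) norm. -/
noncomputable def l2OpNorm {N : Type*} [Fintype N] [DecidableEq N] (A : Matrix N N ℝ) : ℝ :=
  ‖Matrix.toEuclideanCLM (𝕜 := ℝ) A‖

/-- Entrywise α-th power (with the convention 0^0 = 1, as for `Real.rpow`). -/
noncomputable def hadPow {N : Type*} (A : Matrix N N ℝ) (α : ℝ) : Matrix N N ℝ :=
  fun i j => A i j ^ α

/-- Hadamard weighted geometric mean `A₁^{(α₁)} ∘ ⋯ ∘ A_m^{(α_m)}`. -/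
noncomputable def hadGeo {m : ℕ} {N : Type*} (A : Fin m → Matrix N N ℝ) (α : Fin m → ℝ) :
    Matrix N N ℝ :=
  fun i j => ∏ k, (A k i j) ^ (α k)
section Auxiliary

open Filter
open scoped Matrix.Norms.L2Operator

/-- If `a ^ n ≤ K * b ^ n` frequently, then `a ≤ b` (for `0 ≤ b`). -/
lemma le_of_frequently_pow_le {a b K : ℝ} (hb : 0 ≤ b)
    (h : ∃ᶠ n in atTop, a ^ n ≤ K * b ^ n) : a ≤ b := by
  by_contra hab
  push_neg at hab
  have ha : 0 < a := lt_of_le_of_lt hb hab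
  rcases eq_or_lt_of_le hb with hb0 | hb0
  · obtain ⟨n, hn1, hn⟩ := (h.and_eventually (eventually_ge_atTop 1)).exists
    rw [← hb0, zero_pow (by omega), mul_zero] at hn1
    exact absurd hn1 (not_le.2 (pow_pos ha n))
  · have ht : 1 < a / b := (one_lt_div hb0).2 hab
    have := (tendsto_pow_atTop_atTop_of_one_lt ht).eventually_gt_atTop K
    obtain ⟨n, hn1, hn2⟩ := (h.and_eventually this).exists
    rw [div_pow, lt_div_iff₀ (pow_pos hb0 n)] at hn2
    exact absurd hn1 (not_le.2 hn2)

/-- Generalized Hölder: sum of weighted geometric means ≤ weighted geometric mean of sums. -/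
lemma sum_prod_rpow_le {m : ℕ} {ι : Type*} (s : Finset ι) (f : Fin m → ι → ℝ)
    (hf : ∀ k i, 0 ≤ f k i) (α : Fin m → ℝ) (hα : ∀ k, 0 < α k) (hsum : ∑ k, α k = 1) :
    ∑ i ∈ s, ∏ k, f k i ^ α k ≤ ∏ k, (∑ i ∈ s, f k i) ^ α k := by
  by_cases hT : ∀ k, 0 < ∑ i ∈ s, f k i
  · set T : Fin m → ℝ := fun k => ∑ i ∈ s, f k i with hTdef
    have hP : 0 < ∏ k, T k ^ α k :=
      Finset.prod_pos fun k _ => Real.rpow_pos_of_pos (hT k) _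
    rw [← div_le_one hP, Finset.sum_div]
    have key : ∀ i ∈ s, (∏ k, f k i ^ α k) / (∏ k, T k ^ α k) ≤ ∑ k, α k * (f k i / T k) := by
      intro i _
      have := Real.geom_mean_le_arith_mean_weighted Finset.univ α (fun k => f k i / T k)
        (fun k _ => (hα k).le) hsum (fun k _ => div_nonneg (hf k i) (hT k).le)
      calc (∏ k, f k i ^ α k) / (∏ k, T k ^ α k) = ∏ k, (f k i / T k) ^ α k := by
            rw [← Finset.prod_div_distrib]
            exact Finset.prod_congr rfl fun k _ =>
              (Real.div_rpow (hf k i) (hT k).le _).symm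
        _ ≤ _ := this
    calc ∑ i ∈ s, (∏ k, f k i ^ α k) / (∏ k, T k ^ α k)
        ≤ ∑ i ∈ s, ∑ k, α k * (f k i / T k) := Finset.sum_le_sum key
      _ = ∑ k, α k * (T k / T k) := by
          rw [Finset.sum_comm]
          exact Finset.sum_congr rfl fun k _ => by
            rw [← Finset.mul_sum, ← Finset.sum_div]
      _ = 1 := by
          rw [← hsum]
          exact Finset.sum_congr rfl fun k _ => by rw [div_self (hT k).ne', mul_one]
  · push_neg at hT
    obtain ⟨k₀, hk₀⟩ := hT
    have hz : ∑ i ∈ s, f k₀ i = 0 :=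
      le_antisymm hk₀ (Finset.sum_nonneg fun i _ => hf k₀ i)
    have hfz : ∀ i ∈ s, f k₀ i = 0 :=
      (Finset.sum_eq_zero_iff_of_nonneg fun i _ => hf k₀ i).1 hz
    have hL : ∑ i ∈ s, ∏ k, f k i ^ α k = 0 := by
      refine Finset.sum_eq_zero fun i hi => Finset.prod_eq_zero (Finset.mem_univ k₀) ?_
      rw [hfz i hi, Real.zero_rpow (hα k₀).ne']
    rw [hL]
    exact Finset.prod_nonneg fun k _ =>
      Real.rpow_nonneg (Finset.sum_nonneg fun i _ => hf k i) _

variable {N : Type*} [Fintype N] [DecidableEq N] {𝕜 : Type*} [RCLike 𝕜]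

omit [DecidableEq N] in
lemma euclid_coord_le (v : EuclideanSpace 𝕜 N) (i : N) : ‖v i‖ ≤ ‖v‖ := by
  rw [EuclideanSpace.norm_eq]
  rw [show ‖v i‖ = Real.sqrt (‖v i‖ ^ 2) by rw [Real.sqrt_sq (norm_nonneg _)]]
  exact Real.sqrt_le_sqrt (Finset.single_le_sum (f := fun i => ‖v i‖ ^ 2)
    (fun i _ => sq_nonneg _) (Finset.mem_univ i))

lemma entry_le_l2norm (Y : Matrix N N 𝕜) (i j : N) : ‖Y i j‖ ≤ ‖Y‖ := by
  have h := Y.l2_opNorm_mulVec (EuclideanSpace.single j 1)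
  rw [EuclideanSpace.norm_single, norm_one, mul_one] at h
  refine le_trans (le_trans (le_of_eq ?_)
    (euclid_coord_le ((EuclideanSpace.equiv N 𝕜).symm <| Y *ᵥ (EuclideanSpace.single j 1)) i)) h
  show ‖Y i j‖ = ‖(Y *ᵥ (EuclideanSpace.single j 1 : EuclideanSpace 𝕜 N)) i‖
  congr 1
  simp [Matrix.mulVec, dotProduct, EuclideanSpace.single_apply]

lemma norm_stdBasisMatrix_le (i j : N) (c : 𝕜) : ‖single i j c‖ ≤ ‖c‖ := by
  rw [Matrix.cstar_norm_def]
  refine ContinuousLinearMap.opNorm_le_bound _ (norm_nonneg c) fun x => ?_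
  have : toEuclideanCLM (𝕜 := 𝕜) (single i j c) x = EuclideanSpace.single i (c * x j) := by
    ext i'
    simp [Matrix.mulVec, dotProduct, Matrix.single, Pi.single_apply, ite_and, eq_comm]
  rw [this, EuclideanSpace.norm_single, norm_mul]
  exact mul_le_mul_of_nonneg_left (euclid_coord_le x j) (norm_nonneg c)

lemma norm_le_sum_entries (Y : Matrix N N 𝕜) : ‖Y‖ ≤ ∑ i, ∑ j, ‖Y i j‖ := by
  nth_rewrite 1 [matrix_eq_sum_single Y]
  refine (norm_sum_le _ _).trans (Finset.sum_le_sum fun i _ =>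
    (norm_sum_le _ _).trans (Finset.sum_le_sum fun j _ => norm_stdBasisMatrix_le i j _))

lemma pow_entry_nonneg {C : Matrix N N ℝ} (hC : ∀ i j, 0 ≤ C i j) (n : ℕ) (hn : 1 ≤ n) :
    ∀ i j, 0 ≤ (C ^ n) i j := by
  induction n with
  | zero => omega
  | succ n ih =>
    rcases Nat.eq_or_lt_of_le hn with h1 | h1
    · simpa [← h1] using hC
    · intro i j
      rw [pow_succ, Matrix.mul_apply]
      exact Finset.sum_nonneg fun l _ => mul_nonneg (ih (by omega) i l) (hC l j)

lemma pow_entry_mono {C D : Matrix N N ℝ} (hC : ∀ i j, 0 ≤ C i j)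
    (hCD : ∀ i j, C i j ≤ D i j) (n : ℕ) (hn : 1 ≤ n) :
    ∀ i j, (C ^ n) i j ≤ (D ^ n) i j := by
  induction n with
  | zero => omega
  | succ n ih =>
    rcases Nat.eq_or_lt_of_le hn with h1 | h1
    · simpa [← h1] using hCD
    · intro i j
      rw [pow_succ, pow_succ, Matrix.mul_apply, Matrix.mul_apply]
      refine Finset.sum_le_sum fun l _ => ?_
      have h1n : 1 ≤ n := by omega
      exact mul_le_mul (ih h1n i l) (hCD l j) (hC l j)
        (le_trans (pow_entry_nonneg hC n h1n i l) (ih h1n i l))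

lemma spectralRadius_ne_top (A : Matrix N N ℂ) : spectralRadius ℂ A ≠ ⊤ := by
  refine ne_top_of_le_ne_top (b := ENNReal.ofReal (‖A‖ * ‖(1 : Matrix N N ℂ)‖))
    ENNReal.ofReal_ne_top ?_
  refine iSup₂_le fun k hk => ?_
  rw [show ((‖k‖₊ : NNReal) : ENNReal) = ENNReal.ofReal ‖k‖ from (ofReal_norm k).symm]
  exact ENNReal.ofReal_le_ofReal (spectrum.norm_le_norm_mul_of_mem hk)

lemma map_pow_ofReal (C : Matrix N N ℝ) (n : ℕ) :
    (C.map Complex.ofReal) ^ n = (C ^ n).map Complex.ofReal := by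
  have h : ∀ X : Matrix N N ℝ, X.map Complex.ofReal = Complex.ofRealHom.mapMatrix X :=
    fun X => rfl
  rw [h, h, map_pow]

omit [Fintype N] [DecidableEq N] in
lemma norm_ofReal_entry (C : Matrix N N ℝ) (i j : N) :
    ‖(C.map Complex.ofReal) i j‖ = |C i j| := by
  simp [Matrix.map_apply, Complex.norm_real]

lemma specRad_nonneg (C : Matrix N N ℝ) : 0 ≤ specRad C := ENNReal.toReal_nonneg

/-- Key upper bound lemma: if entries of `C ^ n` are eventually dominated by `K * v ^ n`,
then the spectral radius of `C` is at most `v`. -/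
lemma specRad_le_of_pow_entries {C : Matrix N N ℝ} {K v : ℝ} (hv : 0 ≤ v)
    (h : ∀ᶠ n in atTop, ∀ i j, |(C ^ n) i j| ≤ K * v ^ n) : specRad C ≤ v := by
  set a := C.map Complex.ofReal with ha
  have hnorm : ∀ᶠ n in atTop, ‖a ^ n‖ ≤ (Fintype.card N)^2 * K * v ^ n := by
    filter_upwards [h] with n hn
    calc ‖a ^ n‖ ≤ ∑ i, ∑ j, ‖(a ^ n) i j‖ := norm_le_sum_entries _
      _ ≤ ∑ _i : N, ∑ _j : N, K * v ^ n := by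
          refine Finset.sum_le_sum fun i _ => Finset.sum_le_sum fun j _ => ?_
          rw [ha, map_pow_ofReal, norm_ofReal_entry]
          exact hn i j
      _ = (Fintype.card N)^2 * K * v ^ n := by
          simp [Finset.sum_const, Finset.card_univ]; ring
  have key : ∀ l ∈ spectrum ℂ a, ‖l‖ ≤ v := by
    intro l hl
    refine le_of_frequently_pow_le
      (K := (Fintype.card N)^2 * K * ‖(1 : Matrix N N ℂ)‖) hv (Filter.Eventually.frequently ?_)
    filter_upwards [hnorm] with n hn
    have hpow : l ^ n ∈ spectrum ℂ (a ^ n) := by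
      simpa using spectrum.subset_polynomial_aeval a (Polynomial.monomial n (1 : ℂ))
        ⟨l, hl, by simp⟩
    calc ‖l‖ ^ n = ‖l ^ n‖ := (norm_pow l n).symm
      _ ≤ ‖a ^ n‖ * ‖(1 : Matrix N N ℂ)‖ := spectrum.norm_le_norm_mul_of_mem hpow
      _ ≤ ((Fintype.card N)^2 * K * ‖(1 : Matrix N N ℂ)‖) * v ^ n := by
          have h1 : (0:ℝ) ≤ ‖(1 : Matrix N N ℂ)‖ := norm_nonneg _
          nlinarith [hn, h1]
  have : spectralRadius ℂ a ≤ ENNReal.ofReal v := by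
    refine iSup₂_le fun l hl => ?_
    rw [show ((‖l‖₊ : NNReal) : ENNReal) = ENNReal.ofReal ‖l‖ from (ofReal_norm l).symm]
    exact ENNReal.ofReal_le_ofReal (key l hl)
  calc specRad C = (spectralRadius ℂ a).toReal := rfl
    _ ≤ (ENNReal.ofReal v).toReal := ENNReal.toReal_mono ENNReal.ofReal_ne_top this
    _ = v := ENNReal.toReal_ofReal hv

lemma l2_eventually_norm_pow_le (D : Matrix N N ℝ) {ε : ℝ} (hε : 0 < ε) :
    ∀ᶠ n in atTop, ‖(D.map Complex.ofReal) ^ n‖ ≤ (specRad D + ε) ^ n := by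
  set a := D.map Complex.ofReal with ha
  have hfin := spectralRadius_ne_top (N := N) a
  have hlt : spectralRadius ℂ a < ENNReal.ofReal (specRad D + ε) := by
    have : spectralRadius ℂ a = ENNReal.ofReal (specRad D) := by
      rw [specRad, ← ha, ENNReal.ofReal_toReal hfin]
    rw [this, ENNReal.ofReal_lt_ofReal_iff
      (add_pos_of_nonneg_of_pos (specRad_nonneg D) hε)]
    exact lt_add_of_pos_right _ hε
  have hG := spectrum.pow_nnnorm_pow_one_div_tendsto_nhds_spectralRadius a
  have hev : ∀ᶠ n : ℕ in atTop,
      (‖a ^ n‖₊ : ENNReal) ^ (1 / n : ℝ) < ENNReal.ofReal (specRad D + ε) :=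
    hG.eventually_lt_const hlt
  filter_upwards [hev, eventually_ge_atTop 1] with n hn hn1
  have hx : (‖a ^ n‖₊ : ENNReal) ≤ (ENNReal.ofReal (specRad D + ε)) ^ n := by
    have h2 : ((‖a ^ n‖₊ : ENNReal) ^ (1 / n : ℝ)) ^ (n : ℕ) ≤
        (ENNReal.ofReal (specRad D + ε)) ^ n := pow_le_pow_left' hn.le n
    rwa [← ENNReal.rpow_natCast ((‖a ^ n‖₊ : ENNReal) ^ (1 / n : ℝ)) n,
      ← ENNReal.rpow_mul, one_div, inv_mul_cancel₀ (Nat.cast_ne_zero.2 (by omega) : (n:ℝ) ≠ 0),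
      ENNReal.rpow_one] at h2
  rw [← ENNReal.ofReal_pow (add_pos_of_nonneg_of_pos (specRad_nonneg D) hε).le] at hx
  rw [show ((‖a ^ n‖₊ : NNReal) : ENNReal) = ENNReal.ofReal ‖a ^ n‖ from (ofReal_norm _).symm] at hx
  exact (ENNReal.ofReal_le_ofReal_iff
    (pow_nonneg (add_pos_of_nonneg_of_pos (specRad_nonneg D) hε).le n)).1 hx

/-- Entries of powers of a real matrix are bounded by the complex operator norm of powers. -/
lemma entry_pow_le_cnorm (D : Matrix N N ℝ) (n : ℕ) (i j : N) :
    |(D ^ n) i j| ≤ ‖(D.map Complex.ofReal) ^ n‖ := by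
  rw [map_pow_ofReal, ← norm_ofReal_entry]
  exact entry_le_l2norm _ i j

/-- Monotonicity of the spectral radius on entrywise-nonnegative matrices. -/
lemma specRad_mono {C D : Matrix N N ℝ} (hC : ∀ i j, 0 ≤ C i j)
    (hCD : ∀ i j, C i j ≤ D i j) : specRad C ≤ specRad D := by
  refine le_of_forall_pos_le_add fun ε hε => ?_
  refine specRad_le_of_pow_entries (K := 1)
    (add_nonneg (specRad_nonneg D) hε.le) ?_
  filter_upwards [l2_eventually_norm_pow_le D hε, eventually_ge_atTop 1] with n hn hn1 i j
  rw [one_mul, abs_of_nonneg (pow_entry_nonneg hC n hn1 i j)]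
  calc (C ^ n) i j ≤ (D ^ n) i j := pow_entry_mono hC hCD n hn1 i j
    _ ≤ |(D ^ n) i j| := le_abs_self _
    _ ≤ ‖(D.map Complex.ofReal) ^ n‖ := entry_pow_le_cnorm D n i j
    _ ≤ (specRad D + ε) ^ n := hn

/-- A self-adjoint nonnegative matrix dominated entrywise by `G` has operator norm
at most the spectral radius of `G`. -/
lemma l2norm_le_specRad {M G : Matrix N N ℝ} (hsym : IsSelfAdjoint M)
    (hM0 : ∀ i j, 0 ≤ M i j) (hMG : ∀ i j, M i j ≤ G i j) : ‖M‖ ≤ specRad G := by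
  refine le_of_forall_pos_le_add fun ε hε => ?_
  obtain ⟨n₀, hn₀⟩ := Filter.eventually_atTop.mp (l2_eventually_norm_pow_le G hε)
  refine le_of_frequently_pow_le (K := ((Fintype.card N : ℝ))^2)
    (add_nonneg (specRad_nonneg G) hε.le) ?_
  rw [Filter.frequently_atTop]
  intro n'
  refine ⟨2 ^ (max n' n₀), le_trans (le_max_left _ _) (Nat.le_of_lt (Nat.lt_two_pow_self)), ?_⟩
  set k := max n' n₀ with hk
  set n := 2 ^ k with hn
  have h2k : n₀ ≤ n := le_trans (le_max_right _ _) (Nat.le_of_lt (Nat.lt_two_pow_self))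
  have hn1 : 1 ≤ n := Nat.one_le_two_pow
  have hpow : ‖M‖ ^ n = ‖M ^ n‖ := by
    have h := hsym.nnnorm_pow_two_pow k
    rw [hn]
    simpa [NNReal.coe_pow, coe_nnnorm] using congrArg NNReal.toReal h.symm
  calc ‖M‖ ^ n = ‖M ^ n‖ := hpow
    _ ≤ ∑ i, ∑ j, ‖(M ^ n) i j‖ := norm_le_sum_entries _
    _ ≤ ∑ _i : N, ∑ _j : N, (specRad G + ε) ^ n := by
        refine Finset.sum_le_sum fun i _ => Finset.sum_le_sum fun j _ => ?_
        rw [Real.norm_eq_abs, abs_of_nonneg (pow_entry_nonneg hM0 n hn1 i j)]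
        calc (M ^ n) i j ≤ (G ^ n) i j := pow_entry_mono hM0 hMG n hn1 i j
          _ ≤ |(G ^ n) i j| := le_abs_self _
          _ ≤ ‖(G.map Complex.ofReal) ^ n‖ := entry_pow_le_cnorm G n i j
          _ ≤ (specRad G + ε) ^ n := hn₀ n h2k
    _ = ((Fintype.card N : ℝ))^2 * (specRad G + ε) ^ n := by
        simp [Finset.sum_const, Finset.card_univ]; ring

end Auxiliary

section MainProof
open Filter
open scoped Matrix.Norms.L2Operator

theorem stmt11 {m : ℕ} (hm : 0 < m) {N : Type*} [Fintype N] [DecidableEq N]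
    (A : Fin m → Matrix N N ℝ) (hA : ∀ k, ∀ i j, 0 ≤ A k i j)
    (α : Fin m → ℝ) (hα : ∀ k, 0 < α k) (hsum : ∑ k, α k = 1) :
    l2OpNorm (hadGeo A α) ≤
        specRad (hadGeo (fun k => (A k)ᵀ * A k) α) ^ ((1 : ℝ) / 2) ∧
      specRad (hadGeo (fun k => (A k)ᵀ * A k) α) ^ ((1 : ℝ) / 2) ≤
        ∏ k, l2OpNorm (A k) ^ (α k) := by
  have hl2 : ∀ (X : Matrix N N ℝ), l2OpNorm X = ‖X‖ := fun X => rfl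
  set B := hadGeo A α with hB
  set S : Fin m → Matrix N N ℝ := fun k => (A k)ᵀ * A k with hS
  set G := hadGeo S α with hG
  -- nonnegativity facts
  have hB0 : ∀ i j, 0 ≤ B i j := fun i j =>
    Finset.prod_nonneg fun k _ => Real.rpow_nonneg (hA k i j) _
  have hS0 : ∀ k i j, 0 ≤ S k i j := fun k i j =>
    Finset.sum_nonneg fun l _ => mul_nonneg (hA k l i) (hA k l j)
  have hG0 : ∀ i j, 0 ≤ G i j := fun i j =>
    Finset.prod_nonneg fun k _ => Real.rpow_nonneg (hS0 k i j) _
  -- the Hölder comparison BᵀB ≤ G entrywise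
  have hMG : ∀ i j, (Bᵀ * B) i j ≤ G i j := by
    intro i j
    have key : (Bᵀ * B) i j = ∑ l, ∏ k, (A k l i * A k l j) ^ (α k) := by
      rw [Matrix.mul_apply]
      refine Finset.sum_congr rfl fun l _ => ?_
      rw [Matrix.transpose_apply, hB]
      show (∏ k, (A k l i) ^ (α k)) * (∏ k, (A k l j) ^ (α k)) = _
      rw [← Finset.prod_mul_distrib]
      exact Finset.prod_congr rfl fun k _ =>
        (Real.mul_rpow (hA k l i) (hA k l j)).symm
    rw [key]
    have := sum_prod_rpow_le Finset.univ (fun k l => A k l i * A k l j)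
      (fun k l => mul_nonneg (hA k l i) (hA k l j)) α hα hsum
    refine this.trans (le_of_eq ?_)
    refine Finset.prod_congr rfl fun k _ => ?_
    rw [hS]
    rfl
  have hM0 : ∀ i j, 0 ≤ (Bᵀ * B) i j := fun i j =>
    Finset.sum_nonneg fun l _ => mul_nonneg (hB0 l i) (hB0 l j)
  have hMsym : IsSelfAdjoint (Bᵀ * B) := by
    show star (Bᵀ * B) = Bᵀ * B
    rw [Matrix.star_eq_conjTranspose, conjTranspose_eq_transpose_of_trivial,
      transpose_mul, transpose_transpose]
  -- first inequality
  have h1 : l2OpNorm B ≤ specRad G ^ ((1:ℝ)/2) := by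
    have hBB : ‖Bᵀ * B‖ = ‖B‖ * ‖B‖ := by
      rw [← conjTranspose_eq_transpose_of_trivial]
      exact Matrix.l2_opNorm_conjTranspose_mul_self B
    have hle : ‖B‖ ^ 2 ≤ specRad G := by
      rw [sq, ← hBB]
      exact l2norm_le_specRad hMsym hM0 hMG
    have hBeq : ‖B‖ = (‖B‖ ^ 2) ^ ((1:ℝ)/2) := by
      rw [← Real.rpow_natCast ‖B‖ 2, ← Real.rpow_mul (norm_nonneg B)]
      norm_num
    rw [hl2, hBeq]
    exact Real.rpow_le_rpow (sq_nonneg _) hle (by norm_num)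
  refine ⟨h1, ?_⟩
  -- second inequality
  set v : ℝ := ∏ k, ‖S k‖ ^ (α k) with hv
  have hv0 : 0 ≤ v := Finset.prod_nonneg fun k _ => Real.rpow_nonneg (norm_nonneg _) _
  -- entrywise bound on powers of G
  have hGpow : ∀ n, 1 ≤ n → ∀ i j, (G ^ n) i j ≤ ∏ k, ((S k ^ n) i j) ^ (α k) := by
    intro n hn
    induction n with
    | zero => omega
    | succ n ih =>
      rcases Nat.eq_or_lt_of_le hn with h1 | h1
      · intro i j
        simp only [← h1, pow_one]
        exact le_of_eq rfl
      · have h1n : 1 ≤ n := by omega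
        intro i j
        rw [pow_succ, Matrix.mul_apply]
        have step1 : ∀ l, (G ^ n) i l * G l j ≤
            ∏ k, ((S k ^ n) i l * S k l j) ^ (α k) := by
          intro l
          have e1 : (∏ k, ((S k ^ n) i l) ^ (α k)) * (∏ k, (S k l j) ^ (α k)) =
              ∏ k, ((S k ^ n) i l * S k l j) ^ (α k) := by
            rw [← Finset.prod_mul_distrib]
            exact Finset.prod_congr rfl fun k _ =>
              (Real.mul_rpow (pow_entry_nonneg (hS0 k) n h1n i l) (hS0 k l j)).symm
          rw [← e1]
          refine mul_le_mul (ih h1n i l) (le_of_eq rfl) (hG0 l j) ?_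
          exact Finset.prod_nonneg fun k _ =>
            Real.rpow_nonneg (pow_entry_nonneg (hS0 k) n h1n i l) _
        refine (Finset.sum_le_sum fun l _ => step1 l).trans ?_
        have := sum_prod_rpow_le Finset.univ (fun k l => (S k ^ n) i l * S k l j)
          (fun k l => mul_nonneg (pow_entry_nonneg (hS0 k) n h1n i l) (hS0 k l j))
          α hα hsum
        refine this.trans (le_of_eq (Finset.prod_congr rfl fun k _ => ?_))
        rw [pow_succ, Matrix.mul_apply]
  have h2 : specRad G ≤ v := by
    refine specRad_le_of_pow_entries (K := 1) hv0 ?_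
    filter_upwards [eventually_ge_atTop 1] with n hn1 i j
    rw [one_mul, abs_of_nonneg (pow_entry_nonneg hG0 n hn1 i j)]
    refine (hGpow n hn1 i j).trans ?_
    have hfac : ∀ k : Fin m, ((S k ^ n) i j) ^ (α k) ≤ (‖S k‖ ^ (α k)) ^ n := by
      intro k
      have hentry : (S k ^ n) i j ≤ ‖S k‖ ^ n := by
        calc (S k ^ n) i j ≤ ‖(S k ^ n) i j‖ := le_abs_self _
          _ ≤ ‖S k ^ n‖ := entry_le_l2norm _ i j
          _ ≤ ‖S k‖ ^ n := norm_pow_le' (S k) (by omega)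
      have := Real.rpow_le_rpow (pow_entry_nonneg (hS0 k) n hn1 i j) hentry (hα k).le
      refine this.trans (le_of_eq ?_)
      rw [← Real.rpow_natCast ‖S k‖ n, ← Real.rpow_mul (norm_nonneg _), mul_comm,
        Real.rpow_mul (norm_nonneg _), Real.rpow_natCast]
    calc ∏ k, ((S k ^ n) i j) ^ (α k) ≤ ∏ k, (‖S k‖ ^ (α k)) ^ n := by
          refine Finset.prod_le_prod (fun k _ =>
            Real.rpow_nonneg (pow_entry_nonneg (hS0 k) n hn1 i j) _) fun k _ => hfac k
      _ = v ^ n := by rw [hv, ← Finset.prod_pow]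
  -- rewrite v
  have hveq : v = (∏ k, l2OpNorm (A k) ^ (α k)) ^ 2 := by
    rw [hv, sq, ← Finset.prod_mul_distrib]
    refine Finset.prod_congr rfl fun k _ => ?_
    have hSn : ‖S k‖ = ‖A k‖ * ‖A k‖ := by
      rw [hS]
      show ‖(A k)ᵀ * (A k)‖ = _
      rw [← conjTranspose_eq_transpose_of_trivial]
      exact Matrix.l2_opNorm_conjTranspose_mul_self (A k)
    rw [hSn, hl2, Real.mul_rpow (norm_nonneg _) (norm_nonneg _)]
  have hw0 : 0 ≤ ∏ k, l2OpNorm (A k) ^ (α k) := by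
    refine Finset.prod_nonneg fun k _ => Real.rpow_nonneg ?_ _
    rw [hl2]; exact norm_nonneg _
  calc specRad G ^ ((1:ℝ)/2) ≤ v ^ ((1:ℝ)/2) :=
        Real.rpow_le_rpow (specRad_nonneg G) h2 (by norm_num)
    _ = ∏ k, l2OpNorm (A k) ^ (α k) := by
        rw [hveq, ← Real.rpow_natCast (∏ k, l2OpNorm (A k) ^ (α k)) 2,
          ← Real.rpow_mul hw0]
        norm_num

end MainProof
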